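/- Let R be a semilocal ring and let S be a simple R-module. Then there exists an element r ∈ R such that, setting N to be the cyclic R-module R/rR, the quotient N/(N·J(R)) is isomorphic to S as an R-module. -/

import Mathlib

/-- A ring is semilocal if its quotient by the Jacobson radical is a semisimple
(artinian) ring. -/
def IsSemilocalRing (R : Type*) [Ring R] : Prop :=
  IsSemisimpleRing (TwoSidedIdeal.jacobson (⊥ : TwoSidedIdeal R)).ringCon.Quotient

/-- Let `R` be a semilocal ring and `S` a simple `R`-module. Then there is an
element `r ∈ R` such that, for the cyclic module `N = R/rR`, the quotient `N/(N·J(R))` is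
isomorphic to `S` as an `R`-module. -/
theorem exists_cyclic_quotient_jacobson_iso_simple {R S : Type*} [Ring R]
    (hR : IsSemilocalRing R) [AddCommGroup S] [Module R S] [IsSimpleModule R S] :
    ∃ r : R,
      Nonempty (((R ⧸ Ideal.span {r}) ⧸
        (Ideal.jacobson (⊥ : Ideal R) • (⊤ : Submodule R (R ⧸ Ideal.span {r})))) ≃ₗ[R] S) := by
  classical
  set J : Ideal R := Ideal.jacobson ⊥ with hJdef
  -- the Jacobson radical is two-sided
  have hmulr : ∀ {x y : R}, x ∈ J → x * y ∈ J :=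
    fun {x y} hx => Ideal.mul_mem_right y J hx
  obtain ⟨m, hm, ⟨e⟩⟩ := isSimpleModule_iff_quot_maximal.mp ‹IsSimpleModule R S›
  have hJm : J ≤ m := sInf_le ⟨bot_le, hm⟩
  -- the semisimple quotient ring
  set c := (TwoSidedIdeal.jacobson (⊥ : TwoSidedIdeal R)).ringCon with hc
  let f : R →+* c.Quotient := c.mk'
  have hfsurj : Function.Surjective f := fun q => Quotient.inductionOn' q fun x => ⟨x, rfl⟩
  have hker : ∀ x : R, f x = 0 ↔ x ∈ J := by
    intro x
    have h1 : f x = 0 ↔ x ∈ TwoSidedIdeal.ker f := (TwoSidedIdeal.mem_ker f).symm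
    rw [h1]
    have h2 : TwoSidedIdeal.ker f = TwoSidedIdeal.jacobson (⊥ : TwoSidedIdeal R) :=
      TwoSidedIdeal.ker_ringCon_mk' _
    rw [h2, ← TwoSidedIdeal.mem_asIdeal, TwoSidedIdeal.asIdeal_jacobson]
    have h3 : TwoSidedIdeal.asIdeal (⊥ : TwoSidedIdeal R) = (⊥ : Ideal R) := by
      ext y
      simp only [TwoSidedIdeal.mem_asIdeal, Ideal.mem_bot]
      exact ⟨fun h => h, fun h => h⟩
    rw [h3]
  have hcomapbot : Ideal.comap f ⊥ = J := by
    ext x; simpa [Ideal.mem_comap] using hker x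
  haveI : IsSemisimpleRing c.Quotient := hR
  -- the image of m is a principal left ideal of the quotient
  set m' : Ideal c.Quotient := Ideal.map f m with hm'
  obtain ⟨cpl, hcpl⟩ := exists_isCompl m'
  set g : c.Quotient := ((Submodule.linearProjOfIsCompl m' cpl hcpl 1 : m') : c.Quotient) with hg
  have hgm' : g ∈ m' := (Submodule.linearProjOfIsCompl m' cpl hcpl 1).2
  have hspan : m' = Ideal.span {g} := by
    apply le_antisymm
    · intro x hx
      have h1 : Submodule.linearProjOfIsCompl m' cpl hcpl x = ⟨x, hx⟩ :=
        Submodule.linearProjOfIsCompl_apply_left hcpl ⟨x, hx⟩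
      have h2 : Submodule.linearProjOfIsCompl m' cpl hcpl x
          = x • Submodule.linearProjOfIsCompl m' cpl hcpl 1 := by
        rw [← map_smul]; congr 1; simp
      have h3 : x = x • g := by
        have := h1.symm.trans h2
        simpa [hg] using congrArg Subtype.val this
      rw [h3]
      exact Submodule.smul_mem _ _ (Submodule.mem_span_singleton_self g)
    · rwa [Ideal.span_le, Set.singleton_subset_iff]
  obtain ⟨r, hr⟩ := hfsurj g
  -- m = span {r} ⊔ J
  have hrm : r ∈ m := by
    have : r ∈ Ideal.comap f m' := by
      simp only [Ideal.mem_comap, hr]; exact hgm'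
    rwa [hm', Ideal.comap_map_of_surjective f hfsurj, hcomapbot, sup_eq_left.mpr hJm] at this
  have hmr : m = Ideal.span {r} ⊔ J := by
    apply le_antisymm
    · intro x hx
      have hfx : f x ∈ m' := Ideal.mem_map_of_mem f hx
      rw [hspan] at hfx
      obtain ⟨a, ha⟩ := Submodule.mem_span_singleton.mp hfx
      obtain ⟨y, hy⟩ := hfsurj a
      have hxy : x - y * r ∈ J := by
        rw [← hker]
        have : f (y * r) = a • g := by rw [map_mul, hy, hr]; rfl
        rw [map_sub, this, ha, sub_self]
      have : x = y * r + (x - y * r) := by abel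
      rw [this]
      exact Submodule.add_mem _
        (Submodule.mem_sup_left (Submodule.mem_span_singleton.mpr ⟨y, rfl⟩))
        (Submodule.mem_sup_right hxy)
    · exact sup_le ((Ideal.span_le).mpr (Set.singleton_subset_iff.mpr hrm)) hJm
  refine ⟨r, ?_⟩
  have hspanm : Ideal.span {r} ≤ m := hmr ▸ le_sup_left
  -- identify J • ⊤ with the image of m in the quotient
  have h2 : (J • (⊤ : Submodule R R)) = J := by
    apply le_antisymm
    · exact Submodule.smul_le.mpr fun j hj x _ => hmulr hj
    · intro j hj
      simpa using Submodule.smul_mem_smul hj (Submodule.mem_top (x := (1 : R)))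
  have hmapspan : Submodule.map (Ideal.span {r} : Submodule R R).mkQ
      (Ideal.span {r} : Submodule R R) = ⊥ := by
    refine le_bot_iff.mp (Submodule.map_le_iff_le_comap.mpr ?_)
    rw [Submodule.comap_bot, Submodule.ker_mkQ]
  have hST : (J • (⊤ : Submodule R (R ⧸ Ideal.span {r})))
      = Submodule.map (Ideal.span {r} : Submodule R R).mkQ m := by
    have h1 : (⊤ : Submodule R (R ⧸ Ideal.span {r}))
        = Submodule.map (Ideal.span {r} : Submodule R R).mkQ ⊤ := by
      rw [Submodule.map_top, Submodule.range_mkQ]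
    rw [h1, ← Submodule.map_smul'', h2, hmr, Submodule.map_sup, hmapspan, bot_sup_eq]
  rw [hJdef] at hST
  rw [hST]
  exact ⟨(Submodule.quotientQuotientEquivQuotient (Ideal.span {r}) m hspanm).trans e.symm⟩
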